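/- Let ν ∈ (0,1], μ > 0, n₀ ≥ 1, and E_ν = E_{ν,1}. With p_k^ν(t) = C(n₀,k) ∑_{r=0}^{n₀-k} C(n₀-k,r)(-1)^r E_ν(-(k+r)μ t^ν) (linear death) and 𝔭_k^ν(t) = ∑_{l=0}^{n₀-k} C(n₀-k,l)(-1)^l E_ν(-(l+1)μ t^ν) (sublinear death), one has ∑_{k=1}^{n₀} p_k^ν(t) = ∑_{k=1}^{n₀} 𝔭_k^ν(t) = -∑_{k=1}^{n₀} C(n₀,k)(-1)^k E_ν(-μ k t^ν) for all t > 0. -/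

import Mathlib

/-- Alternating sum of binomial coefficients over `Icc 1 m` equals `-1` for `m ≥ 1`. -/
lemma alt_sum_Icc (m : ℕ) (hm : 1 ≤ m) :
    ∑ k ∈ Finset.Icc 1 m, (-1 : ℝ) ^ k * (m.choose k : ℝ) = -1 := by
  have h0 : (∑ k ∈ Finset.range (m + 1), ((-1 : ℤ) ^ k * m.choose k : ℤ)) = 0 :=
    Int.alternating_sum_range_choose_of_ne (by omega)
  have hR : (∑ k ∈ Finset.range (m + 1), (-1 : ℝ) ^ k * (m.choose k : ℝ)) = 0 := by
    have := congrArg (fun z : ℤ => (z : ℝ)) h0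
    push_cast at this
    simpa using this
  have hsplit : (∑ k ∈ Finset.range (m + 1), (-1 : ℝ) ^ k * (m.choose k : ℝ)) =
      (-1 : ℝ) ^ 0 * (m.choose 0 : ℝ) +
        ∑ k ∈ Finset.Ico 1 (m + 1), (-1 : ℝ) ^ k * (m.choose k : ℝ) := by
    rw [Finset.range_eq_Ico]
    exact Finset.sum_eq_sum_Ico_succ_bot (by omega) _
  rw [hsplit] at hR
  simp only [pow_zero, Nat.choose_zero_right, Nat.cast_one, one_mul] at hR
  rw [← Finset.Ico_add_one_right_eq_Icc]
  linarith

/-- Key identity for the linear death process. -/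
lemma lemA (g : ℕ → ℝ) (n : ℕ) :
    ∑ k ∈ Finset.Icc 1 n, (n.choose k : ℝ) *
        ∑ r ∈ Finset.range (n - k + 1),
          ((n - k).choose r : ℝ) * (-1) ^ r * g (k + r) =
      -∑ k ∈ Finset.Icc 1 n, (n.choose k : ℝ) * (-1) ^ k * g k := by
  have key : ∀ k ∈ Finset.Icc 1 n,
      (n.choose k : ℝ) * ∑ r ∈ Finset.range (n - k + 1),
          ((n - k).choose r : ℝ) * (-1) ^ r * g (k + r) =
      ∑ m ∈ Finset.Ico k (n + 1),
          (n.choose k : ℝ) * (((n - k).choose (m - k) : ℝ) * (-1) ^ (m - k) * g m) := by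
    intro k hk
    rw [Finset.mem_Icc] at hk
    rw [Finset.sum_Ico_eq_sum_range]
    have h1 : n + 1 - k = n - k + 1 := by omega
    rw [h1, Finset.mul_sum]
    refine Finset.sum_congr rfl fun r _ => ?_
    have h2 : k + r - k = r := by omega
    rw [h2]
  rw [Finset.sum_congr rfl key]
  rw [← Finset.Ico_add_one_right_eq_Icc]
  rw [Finset.sum_Ico_Ico_comm 1 (n + 1)
    (fun k m => (n.choose k : ℝ) * (((n - k).choose (m - k) : ℝ) * (-1) ^ (m - k) * g m))]
  rw [← Finset.sum_neg_distrib]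
  refine Finset.sum_congr rfl fun m hm => ?_
  rw [Finset.mem_Ico] at hm
  have hm1 : 1 ≤ m := hm.1
  have hmn : m ≤ n := by omega
  have step : ∀ k ∈ Finset.Ico 1 (m + 1),
      (n.choose k : ℝ) * (((n - k).choose (m - k) : ℝ) * (-1) ^ (m - k) * g m) =
      ((n.choose m : ℝ) * (-1) ^ m * g m) * ((-1 : ℝ) ^ k * (m.choose k : ℝ)) := by
    intro k hk
    rw [Finset.mem_Ico] at hk
    have hkm : k ≤ m := by omega
    have hcc : (n.choose m : ℝ) * (m.choose k : ℝ) =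
        (n.choose k : ℝ) * ((n - k).choose (m - k) : ℝ) := by
      have := Nat.choose_mul (n := n) hkm
      exact_mod_cast congrArg (fun z : ℕ => (z : ℝ)) this
    have hsgn : ((-1 : ℝ)) ^ (m - k) = (-1 : ℝ) ^ m * (-1 : ℝ) ^ k := by
      have h3 : m + k = (m - k) + 2 * k := by omega
      have : ((-1 : ℝ)) ^ (m + k) = (-1 : ℝ) ^ (m - k) := by
        rw [h3, pow_add, pow_mul]
        simp
      rw [← this, pow_add]
    rw [hsgn, ← mul_assoc, ← mul_assoc]
    rw [show (n.choose k : ℝ) * ((n - k).choose (m - k) : ℝ) * ((-1 : ℝ) ^ m * (-1 : ℝ) ^ k) * g m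
        = ((n.choose k : ℝ) * ((n - k).choose (m - k) : ℝ)) * ((-1 : ℝ) ^ m * (-1 : ℝ) ^ k) * g m
        by ring, ← hcc]
    ring
  rw [Finset.sum_congr rfl step, ← Finset.mul_sum, Finset.Ico_add_one_right_eq_Icc,
    alt_sum_Icc m hm1]
  ring

/-- Key identity for the sublinear death process. -/
lemma lemB (g : ℕ → ℝ) (n : ℕ) (hn : 1 ≤ n) :
    ∑ k ∈ Finset.Icc 1 n,
        ∑ l ∈ Finset.range (n - k + 1),
          ((n - k).choose l : ℝ) * (-1) ^ l * g (l + 1) =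
      -∑ k ∈ Finset.Icc 1 n, (n.choose k : ℝ) * (-1) ^ k * g k := by
  -- reindex k ↦ n - k
  have refl1 : ∑ k ∈ Finset.Icc 1 n,
      ∑ l ∈ Finset.range (n - k + 1), ((n - k).choose l : ℝ) * (-1) ^ l * g (l + 1) =
      ∑ j ∈ Finset.range n,
      ∑ l ∈ Finset.range (j + 1), ((j).choose l : ℝ) * (-1) ^ l * g (l + 1) := by
    rw [← Finset.Ico_add_one_right_eq_Icc]
    have := Finset.sum_Ico_reflect
      (fun j => ∑ l ∈ Finset.range (j + 1), ((j).choose l : ℝ) * (-1) ^ l * g (l + 1))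
      1 (le_refl (n + 1))
    simp only [Nat.sub_self, Nat.add_sub_cancel] at this
    rw [this, Finset.range_eq_Ico]
  rw [refl1]
  -- swap the order of summation
  have swap : ∑ j ∈ Finset.range n,
      ∑ l ∈ Finset.range (j + 1), ((j).choose l : ℝ) * (-1) ^ l * g (l + 1) =
      ∑ l ∈ Finset.range n, ∑ j ∈ Finset.Ico l n,
        ((j).choose l : ℝ) * (-1) ^ l * g (l + 1) := by
    simp only [Finset.range_eq_Ico]
    rw [← Finset.sum_Ico_Ico_comm 0 n
      (fun l j => ((j).choose l : ℝ) * (-1) ^ l * g (l + 1))]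
  rw [swap]
  -- hockey stick on the inner sum
  have hockey : ∀ l ∈ Finset.range n,
      ∑ j ∈ Finset.Ico l n, ((j).choose l : ℝ) * (-1) ^ l * g (l + 1) =
      (n.choose (l + 1) : ℝ) * (-1) ^ l * g (l + 1) := by
    intro l hl
    rw [Finset.mem_range] at hl
    rw [← Finset.sum_mul, ← Finset.sum_mul]
    congr 2
    have hIco : Finset.Ico l n = Finset.Icc l (n - 1) := by
      rw [← Finset.Ico_add_one_right_eq_Icc]
      congr 1
      omega
    rw [hIco]
    have := Nat.sum_Icc_choose (n - 1) l
    have hn1 : n - 1 + 1 = n := by omega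
    rw [hn1] at this
    exact_mod_cast congrArg (fun z : ℕ => (z : ℝ)) (by push_cast; exact_mod_cast this)
  rw [Finset.sum_congr rfl hockey]
  -- reindex the RHS
  rw [← Finset.Ico_add_one_right_eq_Icc, Finset.sum_Ico_eq_sum_range]
  rw [← Finset.sum_neg_distrib]
  refine Finset.sum_congr rfl fun l _ => ?_
  rw [show 1 + l = l + 1 by omega]
  rw [pow_succ]
  ring

theorem stmt_12 (ν : ℝ) (hν : ν ∈ Set.Ioc (0 : ℝ) 1) (μ : ℝ) (hμ : 0 < μ)
    (n₀ : ℕ) (hn : 1 ≤ n₀)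
    (E : ℝ → ℝ) (hE : ∀ x, E x = ∑' h : ℕ, x ^ h / Real.Gamma (ν * h + 1))
    (t : ℝ) (ht : 0 < t) :
    (∑ k ∈ Finset.Icc 1 n₀, (n₀.choose k : ℝ) *
        ∑ r ∈ Finset.range (n₀ - k + 1),
          ((n₀ - k).choose r : ℝ) * (-1) ^ r * E (-(((k : ℝ) + r) * μ * t ^ ν)) =
      ∑ k ∈ Finset.Icc 1 n₀,
        ∑ l ∈ Finset.range (n₀ - k + 1),
          ((n₀ - k).choose l : ℝ) * (-1) ^ l * E (-(((l : ℝ) + 1) * μ * t ^ ν))) ∧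
    (∑ k ∈ Finset.Icc 1 n₀,
        ∑ l ∈ Finset.range (n₀ - k + 1),
          ((n₀ - k).choose l : ℝ) * (-1) ^ l * E (-(((l : ℝ) + 1) * μ * t ^ ν)) =
      -∑ k ∈ Finset.Icc 1 n₀, (n₀.choose k : ℝ) * (-1) ^ k * E (-(μ * k * t ^ ν))) := by
  set g : ℕ → ℝ := fun m => E (-(m * μ * t ^ ν)) with hg
  have e1 : ∀ k r : ℕ, E (-(((k : ℝ) + r) * μ * t ^ ν)) = g (k + r) := by
    intro k r
    simp only [hg]
    congr 1
    push_cast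
    ring
  have e2 : ∀ l : ℕ, E (-(((l : ℝ) + 1) * μ * t ^ ν)) = g (l + 1) := by
    intro l
    simp only [hg]
    congr 1
    push_cast
    ring
  have e3 : ∀ k : ℕ, E (-(μ * k * t ^ ν)) = g k := by
    intro k
    simp only [hg]
    congr 1
    ring
  simp only [e1, e2, e3]
  exact ⟨(lemA g n₀).trans (lemB g n₀ hn).symm, lemB g n₀ hn⟩
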